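/- For a monoid G, an endomorphism σ of G, an element g ∈ G, and natural numbers x, y, the semidirect-product key exchange is correct: letting A = ∏_{i=0}^{x-1} σ^i(g) and B = ∏_{i=0}^{y-1} σ^i(g), one has A·σ^x(B) = B·σ^y(A), and both equal ∏_{i=0}^{x+y-1} σ^i(g). -/
import Mathlib


/-- The ordered product `g·σ(g)·σ²(g)⋯σ^{t-1}(g)` (equal to `1` when `t = 0`). -/
def twistedProd {G : Type*} [Monoid G] (σ : Monoid.End G) (g : G) (t : ℕ) : G :=
  ((List.range t).map fun i => (σ ^ i) g).prod

lemma twistedProd_add {G : Type*} [Monoid G] (σ : Monoid.End G) (g : G) (x y : ℕ) :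
    twistedProd σ g (x + y) = twistedProd σ g x * (σ ^ x) (twistedProd σ g y) := by
  unfold twistedProd
  rw [List.range_add, List.map_append, List.prod_append, List.map_map,
    map_list_prod, List.map_map]
  congr 1
  refine congrArg List.prod (List.map_congr_left ?_)
  intro i _
  simp [Function.comp, pow_add, mul_comm]

/-- correctness of the semidirect-product key exchange.
With `A = ∏_{i=0}^{x-1} σ^i(g)` and `B = ∏_{i=0}^{y-1} σ^i(g)`, one has
`A·σ^x(B) = B·σ^y(A)`, and both equal `∏_{i=0}^{x+y-1} σ^i(g)`. -/
theorem spdke_correct {G : Type*} [Monoid G] (σ : Monoid.End G) (g : G) (x y : ℕ) :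
    twistedProd σ g x * (σ ^ x) (twistedProd σ g y)
        = twistedProd σ g y * (σ ^ y) (twistedProd σ g x) ∧
      twistedProd σ g x * (σ ^ x) (twistedProd σ g y) = twistedProd σ g (x + y) := by
  refine ⟨?_, (twistedProd_add σ g x y).symm⟩
  rw [← twistedProd_add, ← twistedProd_add, Nat.add_comm]
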